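/- Let A be a bounded operator on a Hilbert space H with ker A ⊆ ker A* (in particular, if A is normal), and g ∈ ran A. Then there is at most one f ∈ closure(K(A,g)) with Af = g. -/

import Mathlib

open scoped ComplexInnerProductSpace


/-- If `A` is bounded with `ker A ⊆ ker A*` (e.g. `A` normal) and `g ∈ ran A`, then
there is at most one Krylov solution: any two solutions of `Af = g` lying in
`closure(K(A,g))` coincide. -/
theorem stmt8 {H : Type*} [NormedAddCommGroup H] [InnerProductSpace ℂ H] [CompleteSpace H]
    (A : H →L[ℂ] H)
    (hker : LinearMap.ker (A : H →ₗ[ℂ] H) ≤ LinearMap.ker ((ContinuousLinearMap.adjoint A : H →L[ℂ] H) : H →ₗ[ℂ] H))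
    (g : H) (hg : g ∈ Set.range A) :
    ∀ f₁ f₂ : H,
      f₁ ∈ closure ((Submodule.span ℂ (Set.range fun k : ℕ => (A ^ k) g)) : Set H) →
      f₂ ∈ closure ((Submodule.span ℂ (Set.range fun k : ℕ => (A ^ k) g)) : Set H) →
      A f₁ = g → A f₂ = g → f₁ = f₂ := by
  intro f₁ f₂ h₁ h₂ hA₁ hA₂
  set K := Submodule.span ℂ (Set.range fun k : ℕ => (A ^ k) g) with hK
  set d := f₁ - f₂ with hd
  have hdK : d ∈ K.topologicalClosure := by
    have : f₁ ∈ K.topologicalClosure := h₁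
    have : f₂ ∈ K.topologicalClosure := h₂
    exact Submodule.sub_mem _ h₁ h₂
  have hdker : d ∈ LinearMap.ker (A : H →ₗ[ℂ] H) := by
    simp [hd, LinearMap.mem_ker, hA₁, hA₂]
  have hadj : ContinuousLinearMap.adjoint A d = 0 := hker hdker
  -- d is orthogonal to ran A
  have hran : ∀ y : H, (⟪d, A y⟫) = 0 := by
    intro y
    rw [← ContinuousLinearMap.adjoint_inner_left, hadj, inner_zero_left]
  -- hence orthogonal to K
  have horth : d ∈ Kᗮ := by
    apply (Submodule.mem_orthogonal K d).2
    intro u hu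
    rw [← inner_conj_symm]
    have : (⟪d, u⟫) = 0 := by
      induction hu using Submodule.span_induction with
      | mem x hx =>
        obtain ⟨k, rfl⟩ := hx
        cases k with
        | zero =>
          obtain ⟨y, hy⟩ := hg
          simpa [← hy] using hran y
        | succ n =>
          show (⟪d, (A ^ (n+1)) g⟫) = 0
          have h : (A ^ (n+1)) g = A ((A ^ n) g) := by
            rw [pow_succ']; rfl
          rw [h]; exact hran _
      | zero => simp
      | add x y _ _ hx hy => rw [inner_add_right, hx, hy, add_zero]
      | smul c x _ hx => rw [inner_smul_right, hx, mul_zero]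
    simp [this]
  -- d ∈ closure K and d ⊥ K, so d = 0 by continuity of the inner product
  have hzero : (⟪d, d⟫) = 0 := by
    have hcont : Continuous fun x : H => ⟪d, x⟫ := continuous_inner.comp (continuous_const.prodMk continuous_id)
    have : ∀ x ∈ (K : Set H), (⟪d, x⟫) = 0 := fun x hx => by
      have := (Submodule.mem_orthogonal K d).1 horth x hx
      rwa [← inner_conj_symm, map_eq_zero] at this
    have hcl : IsClosed ((fun x : H => ⟪d, x⟫) ⁻¹' {0}) :=
      isClosed_singleton.preimage hcont
    have hsub : closure (K : Set H) ⊆ (fun x : H => ⟪d, x⟫) ⁻¹' {0} :=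
      closure_minimal (fun x hx => this x hx) hcl
    exact hsub hdK
  have : d = 0 := by simpa using inner_self_eq_zero.mp hzero
  exact sub_eq_zero.mp this
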